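/- The composition of two shy maps f: A → B and g: B → C between digital images is a shy map. -/

import Mathlib

/-- A subset `A` is connected under adjacency `κ` if any two of its points are
joined by a path within `A` whose consecutive points are `κ`-adjacent. -/
def DConn {X : Type*} (κ : X → X → Prop) (A : Set X) : Prop :=
  ∀ a ∈ A, ∀ b ∈ A,
    Relation.ReflTransGen (fun u v => κ u v ∧ u ∈ A ∧ v ∈ A) a b

/-- `f` is digitally continuous if images of connected sets are connected. -/
def DCont {X Y : Type*} (κ : X → X → Prop) (lam : Y → Y → Prop) (f : X → Y) : Prop :=
  ∀ A : Set X, DConn κ A → DConn lam (f '' A)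

/-- `f` is shy: a continuous surjection with connected point preimages and
connected preimages of adjacent pairs. -/
def DShy {X Y : Type*} (κ : X → X → Prop) (lam : Y → Y → Prop) (f : X → Y) : Prop :=
  DCont κ lam f ∧ Function.Surjective f ∧
    (∀ y : Y, DConn κ (f ⁻¹' {y})) ∧
    ∀ y₀ y₁ : Y, lam y₀ y₁ → DConn κ (f ⁻¹' {y₀, y₁})


lemma DConn.mono_path {X : Type*} {κ : X → X → Prop} {S T : Set X} (hST : S ⊆ T)
    {a b : X} (h : Relation.ReflTransGen (fun u v => κ u v ∧ u ∈ S ∧ v ∈ S) a b) :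
    Relation.ReflTransGen (fun u v => κ u v ∧ u ∈ T ∧ v ∈ T) a b :=
  Relation.ReflTransGen.mono (r := fun u v => κ u v ∧ u ∈ S ∧ v ∈ S)
    (p := fun u v => κ u v ∧ u ∈ T ∧ v ∈ T)
    (fun _ _ ⟨h1, h2, h3⟩ => ⟨h1, hST h2, hST h3⟩) a b h

lemma shy_preimage_conn {X Y : Type*} {κ : X → X → Prop} {lam : Y → Y → Prop}
    {f : X → Y} (hf : DShy κ lam f) {S : Set Y} (hS : DConn lam S) :
    DConn κ (f ⁻¹' S) := by
  obtain ⟨_, hsurj, hfib, hpair⟩ := hf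
  intro a ha b hb
  have key : ∀ y, Relation.ReflTransGen (fun u v => lam u v ∧ u ∈ S ∧ v ∈ S) (f a) y →
      ∀ b : X, f b = y →
      Relation.ReflTransGen (fun u v => κ u v ∧ u ∈ f ⁻¹' S ∧ v ∈ f ⁻¹' S) a b := by
    intro y hy
    induction hy with
    | refl =>
      intro b hfb
      have : Relation.ReflTransGen
          (fun u v => κ u v ∧ u ∈ f ⁻¹' {f a} ∧ v ∈ f ⁻¹' {f a}) a b :=
        hfib (f a) a rfl b hfb
      exact DConn.mono_path (by intro x hx; simp only [Set.mem_preimage,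
        Set.mem_singleton_iff] at hx; simpa [Set.mem_preimage, hx] using ha) this
    | tail hchain hstep ih =>
      rename_i u v
      intro b hfb
      obtain ⟨hl, huS, hvS⟩ := hstep
      obtain ⟨a', ha'⟩ := hsurj u
      have p1 := ih a' ha'
      have p2 : Relation.ReflTransGen
          (fun x y => κ x y ∧ x ∈ f ⁻¹' ({u, v} : Set Y) ∧ y ∈ f ⁻¹' ({u, v} : Set Y)) a' b := by
        refine hpair u v hl a' ?_ b ?_
        · simp [Set.mem_preimage, ha']
        · simp [Set.mem_preimage, hfb]
      have hsub : (f ⁻¹' ({u, v} : Set Y)) ⊆ f ⁻¹' S := by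
        intro x hx
        rcases hx with h | h <;> simp_all [Set.mem_preimage]
      exact p1.trans (DConn.mono_path hsub p2)
  exact key (f b) (hS (f a) ha (f b) hb) b rfl

theorem composition_of_shy_is_shy {A B C : Type*}
    (κ : A → A → Prop) (lam : B → B → Prop) (μ : C → C → Prop)
    (hκs : Symmetric κ) (hκi : Irreflexive κ)
    (hls : Symmetric lam) (hli : Irreflexive lam)
    (hμs : Symmetric μ) (hμi : Irreflexive μ)
    (f : A → B) (g : B → C)
    (hf : DShy κ lam f) (hg : DShy lam μ g) :
    DShy κ μ (g ∘ f) := by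
  obtain ⟨hfc, hfs, hffib, hfpair⟩ := hf
  obtain ⟨hgc, hgs, hgfib, hgpair⟩ := hg
  refine ⟨?_, hgs.comp hfs, ?_, ?_⟩
  · intro S hS
    have := hgc (f '' S) (hfc S hS)
    simpa [Set.image_image, Function.comp] using this
  · intro y
    have : DConn lam (g ⁻¹' {y}) := hgfib y
    exact shy_preimage_conn ⟨hfc, hfs, hffib, hfpair⟩ this
  · intro y₀ y₁ hy
    have : DConn lam (g ⁻¹' {y₀, y₁}) := hgpair y₀ y₁ hy
    exact shy_preimage_conn ⟨hfc, hfs, hffib, hfpair⟩ this
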